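/- Let X be a finite nonempty alphabet and p a probability distribution on X with p(x) > 0 for all x. Define δ(x,x') = p(x) if x = x', else 0, and π(x,x') = p(x)p(x') on X × X, and let m = (δ + π)/2. Then the Jensen–Shannon divergence D*(δ‖π) = (1/2)·Σ_{x,x'} δ(x,x') log₂(δ(x,x')/m(x,x')) + (1/2)·Σ_{x,x'} π(x,x') log₂(π(x,x')/m(x,x')) equals Σ_x p(x) · (1/2) · log₂( 4 p(x)^{p(x)} / (p(x)+1)^{p(x)+1} ). -/

import Mathlib

/-- For a strictly positive distribution `p` on a finite nonempty alphabet, the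
Jensen–Shannon divergence between the self-joint distribution `δ` and the
self-product distribution `π` equals the Lin entropy
`Σ_x p(x) · (1/2) · log₂(4 p(x)^{p(x)} / (p(x)+1)^{p(x)+1})`. -/
theorem jsd_selfJoint_selfProduct_eq_linEntropy
    {X : Type*} [Fintype X] [DecidableEq X] [Nonempty X] (p : X → ℝ)
    (hp : ∀ x, 0 < p x) (hsum : ∑ x, p x = 1) :
    (let δ : X → X → ℝ := fun x x' => if x = x' then p x else 0
     let π : X → X → ℝ := fun x x' => p x * p x'
     let m : X → X → ℝ := fun x x' => (δ x x' + π x x') / 2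
     (1 / 2) * ∑ x, ∑ x', δ x x' * Real.logb 2 (δ x x' / m x x') +
       (1 / 2) * ∑ x, ∑ x', π x x' * Real.logb 2 (π x x' / m x x')) =
    ∑ x, p x * ((1 / 2) *
      Real.logb 2 (4 * p x ^ p x / (p x + 1) ^ (p x + 1))) := by
  dsimp only
  have hδ : ∀ x : X, ∑ x', (if x = x' then p x else 0) *
      Real.logb 2 ((if x = x' then p x else 0) / (((if x = x' then p x else 0) + p x * p x') / 2))
      = p x * Real.logb 2 (2 / (p x + 1)) := by
    intro x
    rw [Finset.sum_eq_single x]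
    · have hx := hp x
      have h1 : p x + 1 ≠ 0 := by positivity
      have harg : p x / ((p x + p x * p x) / 2) = 2 / (p x + 1) := by
        field_simp; ring
      rw [if_pos rfl, harg]
    · intro b _ hb
      rw [if_neg (Ne.symm hb), zero_mul]
    · simp
  have hπ : ∀ x : X, ∑ x', p x * p x' *
      Real.logb 2 (p x * p x' / (((if x = x' then p x else 0) + p x * p x') / 2))
      = p x + p x * p x * Real.logb 2 (p x / (p x + 1)) := by
    intro x
    have hx := hp x
    have h1 : (0:ℝ) < p x + 1 := by positivity
    have hstep : ∀ x' : X, p x * p x' *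
        Real.logb 2 (p x * p x' / (((if x = x' then p x else 0) + p x * p x') / 2))
        = p x * p x' + (if x = x' then p x * p x * Real.logb 2 (p x / (p x + 1)) else 0) := by
      intro x'
      by_cases h : x = x'
      · subst h
        rw [if_pos rfl, if_pos rfl]
        have harg : p x * p x / ((p x + p x * p x) / 2) = 2 * (p x / (p x + 1)) := by
          field_simp; ring
        rw [harg, Real.logb_mul two_ne_zero (by positivity),
          Real.logb_self_eq_one (by norm_num)]
        ring
      · have hx' := hp x'
        rw [if_neg h, if_neg h]
        have harg : p x * p x' / ((0 + p x * p x') / 2) = 2 := by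
          field_simp; ring
        rw [harg, Real.logb_self_eq_one (by norm_num)]
        ring
    rw [Finset.sum_congr rfl fun x' _ => hstep x', Finset.sum_add_distrib,
      ← Finset.mul_sum, hsum, Finset.sum_ite_eq Finset.univ x
        (fun _ => p x * p x * Real.logb 2 (p x / (p x + 1)))]
    simp
  rw [Finset.sum_congr rfl fun x _ => hδ x, Finset.sum_congr rfl fun x _ => hπ x,
    Finset.mul_sum, Finset.mul_sum, ← Finset.sum_add_distrib]
  refine Finset.sum_congr rfl fun x _ => ?_
  have hx := hp x
  have h1 : (0:ℝ) < p x + 1 := by positivity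
  have e1 : Real.logb 2 (2 / (p x + 1)) = 1 - Real.logb 2 (p x + 1) := by
    rw [Real.logb_div two_ne_zero (ne_of_gt h1),
      Real.logb_self_eq_one (by norm_num)]
  have e2 : Real.logb 2 (p x / (p x + 1)) = Real.logb 2 (p x) - Real.logb 2 (p x + 1) := by
    rw [Real.logb_div (ne_of_gt hx) (ne_of_gt h1)]
  have e3 : Real.logb 2 (4 * p x ^ p x / (p x + 1) ^ (p x + 1))
      = 2 + p x * Real.logb 2 (p x) - (p x + 1) * Real.logb 2 (p x + 1) := by
    have h4 : Real.logb 2 4 = 2 := by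
      rw [show (4:ℝ) = 2 ^ (2:ℕ) by norm_num, Real.logb_pow,
        Real.logb_self_eq_one (by norm_num)]
      norm_num
    rw [Real.logb_div (by positivity) (by positivity),
      Real.logb_mul (by norm_num) (ne_of_gt (Real.rpow_pos_of_pos hx _)), h4]
    simp only [Real.logb, Real.log_rpow hx, Real.log_rpow h1]
    ring
  rw [e1, e2, e3]
  ring
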